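/- arXiv:0903.0520 — 7 statements merged into one kernel-verified Lean document; each statement's English description precedes it below -/
import Mathlib

section
/- Let m ≥ 1 be an integer and let B be any subset of the cells of the m × m square grid. Then |∂B| ≥ √(min{|B|, m² − |B|}). -/
/-- The cells of the `m × m` square grid: pairs `(i, j)` with `1 ≤ i, j ≤ m`. -/
def gridCells (m : ℕ) : Finset (ℕ × ℕ) := (Finset.Icc 1 m) ×ˢ (Finset.Icc 1 m)

/-- Two cells are adjacent if they agree in one coordinate and differ by exactly `1`
in the other (i.e. they share a side). -/
def adjacent (c c' : ℕ × ℕ) : Prop :=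
  (c.1 = c'.1 ∧ (c.2 + 1 = c'.2 ∨ c'.2 + 1 = c.2)) ∨
  (c.2 = c'.2 ∧ (c.1 + 1 = c'.1 ∨ c'.1 + 1 = c.1))

-- The boundary `∂B` of a set `B` of cells: all cells (of the grid) not in `B` that are
-- adjacent to some cell of `B`.
open Classical in
noncomputable def gridBoundary (m : ℕ) (B : Finset (ℕ × ℕ)) : Finset (ℕ × ℕ) :=
  (gridCells m).filter (fun c => c ∉ B ∧ ∃ c' ∈ B, adjacent c c')

open Finset

/-- 1-D intermediate value: between a point in `S` and a later point not in `S`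
there is a last point of `S` whose successor is outside `S`. -/
lemma oneD (S : ℕ → Prop) (a b : ℕ) (hab : a < b) (ha : S a) (hb : ¬ S b) :
    ∃ t, a ≤ t ∧ t < b ∧ S t ∧ ¬ S (t + 1) := by
  classical
  set T := (Finset.Ico a b).filter (fun t => S t) with hT
  have haT : a ∈ T := by simp [hT, hab, ha]
  have hne : T.Nonempty := ⟨a, haT⟩
  have hmm := T.max'_mem hne
  simp only [hT, mem_filter, mem_Ico] at hmm
  refine ⟨T.max' hne, hmm.1.1, hmm.1.2, hmm.2, ?_⟩
  intro hS
  rcases eq_or_lt_of_le (Nat.succ_le_of_lt hmm.1.2) with h | h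
  · exact hb (h ▸ hS)
  · have hmem : T.max' hne + 1 ∈ T := by
      have : a ≤ T.max' hne + 1 := le_trans (T.le_max' a haT) (Nat.le_succ _)
      exact mem_filter.mpr ⟨mem_Ico.mpr ⟨this, h⟩, hS⟩
    have := T.le_max' _ hmem
    omega

lemma mem_gridCells {m i j : ℕ} : (i, j) ∈ gridCells m ↔ (1 ≤ i ∧ i ≤ m) ∧ (1 ≤ j ∧ j ≤ m) := by
  simp [gridCells, Finset.mem_product, Finset.mem_Icc]

lemma row_bdry {m : ℕ} {B : Finset (ℕ × ℕ)} (hB : B ⊆ gridCells m) {i j₁ j₂ : ℕ}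
    (h1 : (i, j₁) ∈ B) (h2 : (i, j₂) ∈ gridCells m) (h2' : (i, j₂) ∉ B) :
    ∃ j, (i, j) ∈ gridBoundary m B := by
  have hg1 := mem_gridCells.mp (hB h1)
  have hg2 := mem_gridCells.mp h2
  rcases lt_trichotomy j₁ j₂ with h | h | h
  · obtain ⟨t, ht1, ht2, ht3, ht4⟩ := oneD (fun j => (i, j) ∈ B) j₁ j₂ h h1 h2'
    refine ⟨t + 1, ?_⟩
    simp only [gridBoundary, mem_filter, mem_gridCells]
    exact ⟨⟨⟨hg1.1.1, hg1.1.2⟩, by omega⟩, ht4, ⟨(i, t), ht3, Or.inl ⟨rfl, Or.inr rfl⟩⟩⟩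
  · exact absurd (h ▸ h1) h2'
  · obtain ⟨t, ht1, ht2, ht3, ht4⟩ := oneD (fun j => (i, j) ∉ B) j₂ j₁ h h2' (not_not_intro h1)
    refine ⟨t, ?_⟩
    simp only [gridBoundary, mem_filter, mem_gridCells]
    exact ⟨⟨⟨hg1.1.1, hg1.1.2⟩, by omega⟩, ht3, ⟨(i, t + 1), not_not.mp ht4, Or.inl ⟨rfl, Or.inl rfl⟩⟩⟩

lemma col_bdry {m : ℕ} {B : Finset (ℕ × ℕ)} (hB : B ⊆ gridCells m) {j i₁ i₂ : ℕ}
    (h1 : (i₁, j) ∈ B) (h2 : (i₂, j) ∈ gridCells m) (h2' : (i₂, j) ∉ B) :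
    ∃ i, (i, j) ∈ gridBoundary m B := by
  have hg1 := mem_gridCells.mp (hB h1)
  have hg2 := mem_gridCells.mp h2
  rcases lt_trichotomy i₁ i₂ with h | h | h
  · obtain ⟨t, ht1, ht2, ht3, ht4⟩ := oneD (fun i => (i, j) ∈ B) i₁ i₂ h h1 h2'
    refine ⟨t + 1, ?_⟩
    simp only [gridBoundary, mem_filter, mem_gridCells]
    exact ⟨⟨by omega, hg1.2⟩, ht4, ⟨(t, j), ht3, Or.inr ⟨rfl, Or.inr rfl⟩⟩⟩
  · exact absurd (h ▸ h1) h2'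
  · obtain ⟨t, ht1, ht2, ht3, ht4⟩ := oneD (fun i => (i, j) ∉ B) i₂ i₁ h h2' (not_not_intro h1)
    refine ⟨t, ?_⟩
    simp only [gridBoundary, mem_filter, mem_gridCells]
    exact ⟨⟨by omega, hg1.2⟩, ht3, ⟨(t + 1, j), not_not.mp ht4, Or.inr ⟨rfl, Or.inl rfl⟩⟩⟩

lemma card_le_of_fst {A : Finset ℕ} {D : Finset (ℕ × ℕ)} (h : ∀ i ∈ A, ∃ j, (i, j) ∈ D) :
    A.card ≤ D.card := by
  calc A.card ≤ (D.image Prod.fst).card := by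
        apply Finset.card_le_card
        intro i hi
        obtain ⟨j, hj⟩ := h i hi
        exact Finset.mem_image.mpr ⟨(i, j), hj, rfl⟩
    _ ≤ D.card := Finset.card_image_le

lemma card_le_of_snd {A : Finset ℕ} {D : Finset (ℕ × ℕ)} (h : ∀ j ∈ A, ∃ i, (i, j) ∈ D) :
    A.card ≤ D.card := by
  calc A.card ≤ (D.image Prod.snd).card := by
        apply Finset.card_le_card
        intro j hj
        obtain ⟨i, hi⟩ := h j hj
        exact Finset.mem_image.mpr ⟨(i, j), hi, rfl⟩
    _ ≤ D.card := Finset.card_image_le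

open Classical in
lemma card_le_rows_mul_cols {m : ℕ} {X : Finset (ℕ × ℕ)} (hX : X ⊆ gridCells m) :
    X.card ≤ ((Finset.Icc 1 m).filter fun i => ∃ j, (i, j) ∈ X).card *
      ((Finset.Icc 1 m).filter fun j => ∃ i, (i, j) ∈ X).card := by
  classical
  have hsub : X ⊆ ((Finset.Icc 1 m).filter fun i => ∃ j, (i, j) ∈ X) ×ˢ
      ((Finset.Icc 1 m).filter fun j => ∃ i, (i, j) ∈ X) := by
    intro c hc
    have hg := mem_gridCells.mp (hX hc)
    simp only [Finset.mem_product, mem_filter, Finset.mem_Icc]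
    exact ⟨⟨⟨hg.1.1, hg.1.2⟩, ⟨c.2, hc⟩⟩, ⟨⟨hg.2.1, hg.2.2⟩, ⟨c.1, hc⟩⟩⟩
  calc X.card ≤ _ := Finset.card_le_card hsub
    _ = _ := Finset.card_product _ _

lemma card_gridCells (m : ℕ) : (gridCells m).card = m ^ 2 := by
  simp [gridCells, Finset.card_product, Nat.card_Icc, sq]

theorem boundary_card_ge_sqrt_min (m : ℕ) (hm : 1 ≤ m)
    (B : Finset (ℕ × ℕ)) (hB : B ⊆ gridCells m) :
    ((gridBoundary m B).card : ℝ) ≥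
      Real.sqrt (min (B.card : ℝ) ((m : ℝ) ^ 2 - (B.card : ℝ))) := by
  classical
  set k := (gridBoundary m B).card with hk
  have hBcard : B.card ≤ m ^ 2 := card_gridCells m ▸ Finset.card_le_card hB
  have hIcc : (Finset.Icc 1 m).card = m := by simp
  have hmk : ∀ _ : m ≤ k, min B.card (m ^ 2 - B.card) ≤ k ^ 2 := fun h =>
    le_trans (le_trans (min_le_left _ _) hBcard) (Nat.pow_le_pow_left h 2)
  have claim : min B.card (m ^ 2 - B.card) ≤ k ^ 2 := by
    by_cases hRE : ∃ i ∈ Finset.Icc 1 m, ∀ j, (i, j) ∉ B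
    · obtain ⟨iE, hiE, hiE'⟩ := hRE
      have hiEm := Finset.mem_Icc.mp hiE
      by_cases hRF : ∃ i ∈ Finset.Icc 1 m, ∀ j ∈ Finset.Icc 1 m, (i, j) ∈ B
      · -- full row and empty row: every column has a boundary cell
        obtain ⟨iF, hiF, hiF'⟩ := hRF
        apply hmk
        rw [← hIcc]
        apply card_le_of_snd
        intro j hj
        have hjm := Finset.mem_Icc.mp hj
        exact col_bdry hB (hiF' j hj)
          (mem_gridCells.mpr ⟨⟨hiEm.1, hiEm.2⟩, ⟨hjm.1, hjm.2⟩⟩) (hiE' j)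
      · -- empty row, no full row: bound |B| by (rows meeting B)·(cols meeting B)
        push_neg at hRF
        have hcols : ((Finset.Icc 1 m).filter fun j => ∃ i, (i, j) ∈ B).card ≤ k := by
          apply card_le_of_snd
          intro j hj
          obtain ⟨hj1, i₁, hi₁⟩ := Finset.mem_filter.mp hj
          have hjm := Finset.mem_Icc.mp hj1
          exact col_bdry hB hi₁
            (mem_gridCells.mpr ⟨⟨hiEm.1, hiEm.2⟩, ⟨hjm.1, hjm.2⟩⟩) (hiE' j)
        have hrows : ((Finset.Icc 1 m).filter fun i => ∃ j, (i, j) ∈ B).card ≤ k := by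
          apply card_le_of_fst
          intro i hi
          obtain ⟨hi1, j₁, hj₁⟩ := Finset.mem_filter.mp hi
          obtain ⟨j₂, hj₂, hj₂'⟩ := hRF i hi1
          have hjm := Finset.mem_Icc.mp hj₂
          have him := Finset.mem_Icc.mp hi1
          exact row_bdry hB hj₁
            (mem_gridCells.mpr ⟨⟨him.1, him.2⟩, ⟨hjm.1, hjm.2⟩⟩) hj₂'
        calc min B.card (m ^ 2 - B.card) ≤ B.card := min_le_left _ _
          _ ≤ _ := card_le_rows_mul_cols hB
          _ ≤ k * k := Nat.mul_le_mul hrows hcols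
          _ = k ^ 2 := (sq k).symm
    · push_neg at hRE
      by_cases hRF : ∃ i ∈ Finset.Icc 1 m, ∀ j ∈ Finset.Icc 1 m, (i, j) ∈ B
      · obtain ⟨iF, hiF, hiF'⟩ := hRF
        by_cases hCF : ∃ j ∈ Finset.Icc 1 m, ∀ i ∈ Finset.Icc 1 m, (i, j) ∈ B
        · -- full row and full column: bound the complement
          obtain ⟨jF, hjF, hjF'⟩ := hCF
          set X := gridCells m \ B with hX
          have hXsub : X ⊆ gridCells m := Finset.sdiff_subset
          have hXcard : X.card = m ^ 2 - B.card := by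
            rw [hX, Finset.card_sdiff_of_subset hB, card_gridCells]
          have hrows : ((Finset.Icc 1 m).filter fun i => ∃ j, (i, j) ∈ X).card ≤ k := by
            apply card_le_of_fst
            intro i hi
            obtain ⟨hi1, j₂, hj₂⟩ := Finset.mem_filter.mp hi
            obtain ⟨hj₂g, hj₂n⟩ := Finset.mem_sdiff.mp hj₂
            exact row_bdry hB (hjF' i hi1) hj₂g hj₂n
          have hcols : ((Finset.Icc 1 m).filter fun j => ∃ i, (i, j) ∈ X).card ≤ k := by
            apply card_le_of_snd
            intro j hj
            obtain ⟨hj1, i₂, hi₂⟩ := Finset.mem_filter.mp hj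
            obtain ⟨hi₂g, hi₂n⟩ := Finset.mem_sdiff.mp hi₂
            exact col_bdry hB (hiF' j hj1) hi₂g hi₂n
          calc min B.card (m ^ 2 - B.card) ≤ m ^ 2 - B.card := min_le_right _ _
            _ = X.card := hXcard.symm
            _ ≤ _ := card_le_rows_mul_cols hXsub
            _ ≤ k * k := Nat.mul_le_mul hrows hcols
            _ = k ^ 2 := (sq k).symm
        · -- full row, no full column: every column has a boundary cell
          push_neg at hCF
          apply hmk
          rw [← hIcc]
          apply card_le_of_snd
          intro j hj
          obtain ⟨i₂, hi₂, hi₂'⟩ := hCF j hj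
          have him := Finset.mem_Icc.mp hi₂
          have hjm := Finset.mem_Icc.mp hj
          exact col_bdry hB (hiF' j hj)
            (mem_gridCells.mpr ⟨⟨him.1, him.2⟩, ⟨hjm.1, hjm.2⟩⟩) hi₂'
      · -- every row meets B, no full row: every row has a boundary cell
        push_neg at hRF
        apply hmk
        rw [← hIcc]
        apply card_le_of_fst
        intro i hi
        obtain ⟨j₁, hj₁⟩ := hRE i hi
        obtain ⟨j₂, hj₂, hj₂'⟩ := hRF i hi
        have him := Finset.mem_Icc.mp hi
        have hjm := Finset.mem_Icc.mp hj₂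
        exact row_bdry hB hj₁
          (mem_gridCells.mpr ⟨⟨him.1, him.2⟩, ⟨hjm.1, hjm.2⟩⟩) hj₂'
  -- from the natural-number claim to the real statement
  have hmin : min (B.card : ℝ) ((m : ℝ) ^ 2 - (B.card : ℝ)) =
      ((min B.card (m ^ 2 - B.card) : ℕ) : ℝ) := by
    rw [Nat.cast_min, Nat.cast_sub hBcard]
    push_cast
    ring_nf
  rw [ge_iff_le, hmin]
  calc Real.sqrt ((min B.card (m ^ 2 - B.card) : ℕ) : ℝ)
      ≤ Real.sqrt (((k ^ 2 : ℕ) : ℝ)) := Real.sqrt_le_sqrt (by exact_mod_cast claim)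
    _ = k := by
        push_cast
        exact Real.sqrt_sq (Nat.cast_nonneg k)
end

section
/- Let K ≥ 1 be an integer and let (q_t)_{t∈ℕ} be a sequence of integers such that q_0 ≥ 1 and, for every t ≥ 0, q_t ≤ K and q_{t+1} ≥ q_t + √(min{q_t, K − q_t}). Then for every natural number t with t ≥ 5·√K it holds that q_t = K. -/
theorem spreading_time (K : ℤ) (hK : 1 ≤ K) (q : ℕ → ℤ) (hq0 : 1 ≤ q 0)
    (hqK : ∀ t : ℕ, q t ≤ K)
    (hstep : ∀ t : ℕ,
      (q (t + 1) : ℝ) ≥ (q t : ℝ) + Real.sqrt (min ((q t : ℝ)) ((K : ℝ) - (q t : ℝ))))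
    (t : ℕ) (ht : (t : ℝ) ≥ 5 * Real.sqrt (K : ℝ)) :
    q t = K := by
  have hmono : ∀ s : ℕ, q s ≤ q (s + 1) := by
    intro s
    have h := hstep s
    have hnn := Real.sqrt_nonneg (min ((q s : ℝ)) ((K : ℝ) - (q s : ℝ)))
    have : (q s : ℝ) ≤ (q (s + 1) : ℝ) := by linarith
    exact_mod_cast this
  have hpos : ∀ s : ℕ, 1 ≤ q s := by
    intro s
    induction s with
    | zero => exact hq0
    | succ n ih => exact le_trans ih (hmono n)
  have hMono : Monotone q := monotone_nat_of_le_succ hmono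
  have key : ∀ s : ℕ, q s < K → (fun s : ℕ => Real.sqrt ((q s : ℝ)) - Real.sqrt ((K : ℝ) - (q s : ℝ))) s + 2/5 ≤ (fun s : ℕ => Real.sqrt ((q s : ℝ)) - Real.sqrt ((K : ℝ) - (q s : ℝ))) (s + 1) := by
    intro s hs
    have ha : (1 : ℝ) ≤ (q s : ℝ) := by exact_mod_cast hpos s
    have hb : (1 : ℝ) ≤ (K : ℝ) - (q s : ℝ) := by
      have : q s + 1 ≤ K := hs
      have : ((q s : ℝ)) + 1 ≤ (K : ℝ) := by exact_mod_cast this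
      linarith
    have hmq : (q s : ℝ) ≤ (q (s + 1) : ℝ) := by exact_mod_cast hmono s
    have hstep' := hstep s
    -- monotonicity of both sqrt terms
    have m1 : Real.sqrt ((q s : ℝ)) ≤ Real.sqrt ((q (s+1) : ℝ)) := Real.sqrt_le_sqrt hmq
    have m2 : Real.sqrt ((K : ℝ) - (q (s+1) : ℝ)) ≤ Real.sqrt ((K : ℝ) - (q s : ℝ)) :=
      Real.sqrt_le_sqrt (by linarith)
    rcases le_or_gt ((q s : ℝ)) ((K : ℝ) - (q s : ℝ)) with hcase | hcase
    · -- min is q s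
      have hminq : min ((q s : ℝ)) ((K : ℝ) - (q s : ℝ)) = (q s : ℝ) := min_eq_left hcase
      rw [hminq] at hstep'
      set u := Real.sqrt ((q s : ℝ)) with hu
      have hu1 : (1 : ℝ) ≤ u := by
        rw [hu, show (1:ℝ) = Real.sqrt 1 from Real.sqrt_one.symm]
        exact Real.sqrt_le_sqrt ha
      have husq : u ^ 2 = (q s : ℝ) := Real.sq_sqrt (by linarith)
      have h1 : (u + 2/5) ^ 2 ≤ (q (s+1) : ℝ) := by nlinarith
      have h2 : u + 2/5 ≤ Real.sqrt ((q (s+1) : ℝ)) := by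
        calc u + 2/5 = Real.sqrt ((u + 2/5) ^ 2) := (Real.sqrt_sq (by linarith)).symm
          _ ≤ Real.sqrt ((q (s+1) : ℝ)) := Real.sqrt_le_sqrt h1
      simp only []
      linarith
    · -- min is K - q s
      have hminq : min ((q s : ℝ)) ((K : ℝ) - (q s : ℝ)) = (K : ℝ) - (q s : ℝ) :=
        min_eq_right (le_of_lt hcase)
      rw [hminq] at hstep'
      set v := Real.sqrt ((K : ℝ) - (q s : ℝ)) with hv
      have hv1 : (1 : ℝ) ≤ v := by
        rw [hv, show (1:ℝ) = Real.sqrt 1 from Real.sqrt_one.symm]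
        exact Real.sqrt_le_sqrt hb
      have hvsq : v ^ 2 = (K : ℝ) - (q s : ℝ) := Real.sq_sqrt (by linarith)
      have h1 : (K : ℝ) - (q (s+1) : ℝ) ≤ (v - 1/2) ^ 2 := by nlinarith
      have h2 : Real.sqrt ((K : ℝ) - (q (s+1) : ℝ)) ≤ v - 1/2 := by
        calc Real.sqrt ((K : ℝ) - (q (s+1) : ℝ)) ≤ Real.sqrt ((v - 1/2) ^ 2) :=
              Real.sqrt_le_sqrt h1
          _ = v - 1/2 := Real.sqrt_sq (by linarith)
      simp only []
      linarith
  have main : ∀ s : ℕ, q s < K → (fun s : ℕ => Real.sqrt ((q s : ℝ)) - Real.sqrt ((K : ℝ) - (q s : ℝ))) 0 + (2/5 : ℝ) * s ≤ (fun s : ℕ => Real.sqrt ((q s : ℝ)) - Real.sqrt ((K : ℝ) - (q s : ℝ))) s := by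
    intro s
    induction s with
    | zero => intro _; simp
    | succ n ih =>
      intro hn1
      have hn : q n < K := lt_of_le_of_lt (hmono n) hn1
      have := key n hn
      have := ih hn
      push_cast
      linarith
  by_contra hne
  have hlt : q t < K := lt_of_le_of_ne (hqK t) hne
  have hmt := main t hlt
  have ha : (1 : ℝ) ≤ (q t : ℝ) := by exact_mod_cast hpos t
  have hb : (1 : ℝ) ≤ (K : ℝ) - (q t : ℝ) := by
    have : q t + 1 ≤ K := hlt
    have : ((q t : ℝ)) + 1 ≤ (K : ℝ) := by exact_mod_cast this
    linarith
  have ha0 : (1 : ℝ) ≤ (q 0 : ℝ) := by exact_mod_cast hq0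
  have hb0 : (K : ℝ) - (q 0 : ℝ) ≤ (K : ℝ) - 1 := by linarith
  -- upper bound on (fun s : ℕ => Real.sqrt ((q s : ℝ)) - Real.sqrt ((K : ℝ) - (q s : ℝ))) t
  have hup : (fun s : ℕ => Real.sqrt ((q s : ℝ)) - Real.sqrt ((K : ℝ) - (q s : ℝ))) t ≤ Real.sqrt ((K : ℝ) - 1) - 1 := by
    have h1 : Real.sqrt ((q t : ℝ)) ≤ Real.sqrt ((K : ℝ) - 1) :=
      Real.sqrt_le_sqrt (by linarith)
    have h2 : (1 : ℝ) ≤ Real.sqrt ((K : ℝ) - (q t : ℝ)) := by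
      rw [show (1:ℝ) = Real.sqrt 1 from Real.sqrt_one.symm]
      exact Real.sqrt_le_sqrt hb
    simp only []; linarith
  -- lower bound on (fun s : ℕ => Real.sqrt ((q s : ℝ)) - Real.sqrt ((K : ℝ) - (q s : ℝ))) 0
  have hlo : 1 - Real.sqrt ((K : ℝ) - 1) ≤ (fun s : ℕ => Real.sqrt ((q s : ℝ)) - Real.sqrt ((K : ℝ) - (q s : ℝ))) 0 := by
    have h1 : (1 : ℝ) ≤ Real.sqrt ((q 0 : ℝ)) := by
      rw [show (1:ℝ) = Real.sqrt 1 from Real.sqrt_one.symm]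
      exact Real.sqrt_le_sqrt ha0
    have h2 : Real.sqrt ((K : ℝ) - (q 0 : ℝ)) ≤ Real.sqrt ((K : ℝ) - 1) :=
      Real.sqrt_le_sqrt hb0
    simp only []; linarith
  have hKK : Real.sqrt ((K : ℝ) - 1) ≤ Real.sqrt (K : ℝ) :=
    Real.sqrt_le_sqrt (by linarith)
  beta_reduce at hmt hup hlo
  have s1 : (2/5:ℝ) * t ≤ 2 * Real.sqrt ((K:ℝ) - 1) - 2 := by linarith
  have s2 : 2 * Real.sqrt ((K:ℝ)) ≤ (2/5:ℝ) * t := by linarith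
  linarith
end

section
/- Let m ≥ 1 be an integer and let B be a subset of the cells of the m × m square grid such that no row of the grid is entirely contained in B, but at least one column of the grid is entirely contained in B. Then |∂B| ≥ m. -/
lemma row_boundary (m : ℕ) (B : Finset (ℕ × ℕ)) (i : ℕ) (hi : i ∈ Finset.Icc 1 m)
    (a : ℕ) (ha : a ∈ Finset.Icc 1 m) (haB : (i, a) ∈ B)
    (b : ℕ) (hb : b ∈ Finset.Icc 1 m) (hbB : (i, b) ∉ B) :
    ∃ j, (i, j) ∈ gridBoundary m B := by
  simp only [Finset.mem_Icc] at ha hb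
  have hne0 : a ≠ b := by rintro rfl; exact hbB haB
  rcases hne0.lt_or_gt with hab | hab
  · -- a < b : take minimal white cell right of a
    set S := (Finset.Icc 1 m).filter (fun j => a < j ∧ (i, j) ∉ B) with hS
    have hne : S.Nonempty := ⟨b, by simp [hS, Finset.mem_Icc, hb, hab, hbB]⟩
    set j := S.min' hne with hj
    have hjS : j ∈ S := S.min'_mem hne
    simp only [hS, Finset.mem_filter] at hjS
    obtain ⟨hjm, haj, hjB⟩ := hjS
    have hprev : (i, j - 1) ∈ B := by
      rcases eq_or_lt_of_le (Nat.succ_le_of_lt haj) with h | h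
      · have : j - 1 = a := by omega
        rwa [this]
      · by_contra hc
        have : j - 1 ∈ S := by
          simp only [hS, Finset.mem_filter, Finset.mem_Icc] at hjm ⊢
          exact ⟨⟨by omega, by omega⟩, by omega, hc⟩
        have := S.min'_le _ this
        omega
    refine ⟨j, ?_⟩
    simp only [gridBoundary, Finset.mem_filter]
    refine ⟨by simp [gridCells, Finset.mem_product, hi, hjm], hjB, ⟨(i, j - 1), hprev, ?_⟩⟩
    left
    exact ⟨rfl, Or.inr (by simp; omega)⟩
  · -- b < a : take maximal white cell left of a
    set S := (Finset.Icc 1 m).filter (fun j => j < a ∧ (i, j) ∉ B) with hS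
    have hne : S.Nonempty := ⟨b, by simp [hS, Finset.mem_Icc, hb, hab, hbB]⟩
    set j := S.max' hne with hj
    have hjS : j ∈ S := S.max'_mem hne
    simp only [hS, Finset.mem_filter] at hjS
    obtain ⟨hjm, haj, hjB⟩ := hjS
    have hnext : (i, j + 1) ∈ B := by
      rcases eq_or_lt_of_le (Nat.succ_le_of_lt haj) with h | h
      · have h' : j + 1 = a := h
        rwa [h']
      · by_contra hc
        have : j + 1 ∈ S := by
          simp only [hS, Finset.mem_filter, Finset.mem_Icc] at hjm ⊢
          exact ⟨⟨by omega, by omega⟩, by omega, hc⟩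
        have := S.le_max' _ this
        omega
    refine ⟨j, ?_⟩
    simp only [gridBoundary, Finset.mem_filter]
    refine ⟨by simp [gridCells, Finset.mem_product, hi, hjm], hjB, ⟨(i, j + 1), hnext, ?_⟩⟩
    left
    exact ⟨rfl, Or.inl rfl⟩

theorem boundary_card_ge_m_of_no_black_row_some_black_col (m : ℕ) (hm : 1 ≤ m)
    (B : Finset (ℕ × ℕ)) (hB : B ⊆ gridCells m)
    (hrow : ∀ i ∈ Finset.Icc 1 m, ∃ j ∈ Finset.Icc 1 m, (i, j) ∉ B)
    (hcol : ∃ j ∈ Finset.Icc 1 m, ∀ i ∈ Finset.Icc 1 m, (i, j) ∈ B) :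
    (gridBoundary m B).card ≥ m := by
  obtain ⟨a, ha, hcol⟩ := hcol
  have key : ∀ i, ∃ j, i ∈ Finset.Icc 1 m → (i, j) ∈ gridBoundary m B := by
    intro i
    by_cases hi : i ∈ Finset.Icc 1 m
    · obtain ⟨b, hb, hbB⟩ := hrow i hi
      obtain ⟨j, hj⟩ := row_boundary m B i hi a ha (hcol i hi) b hb hbB
      exact ⟨j, fun _ => hj⟩
    · exact ⟨0, fun h => absurd h hi⟩
  choose f hf using key
  have : (Finset.Icc 1 m).card ≤ (gridBoundary m B).card := by
    apply Finset.card_le_card_of_injOn (fun i => (i, f i))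
    · intro i hi; exact hf i hi
    · intro x _ y _ h
      exact congrArg Prod.fst h
  simpa using this
end

section
/- Let m ≥ 1 be an integer and let B be a subset of the cells of the m × m square grid such that at least one row of the grid is entirely contained in B and at least one column of the grid is entirely contained in B. Then |∂B| ≥ √(m² − |B|). -/
lemma trans_up {P : ℕ → Prop} {a b : ℕ} (hab : a < b) (ha : P a) (hb : ¬ P b) :
    ∃ k, a ≤ k ∧ k < b ∧ P k ∧ ¬ P (k + 1) := by
  induction b with
  | zero => omega
  | succ n ih =>
    by_cases hn : P n
    · exact ⟨n, by omega, by omega, hn, hb⟩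
    · rcases Nat.lt_or_ge a n with h | h
      · obtain ⟨k, h1, h2, h3, h4⟩ := ih h hn
        exact ⟨k, h1, by omega, h3, h4⟩
      · have : a = n := by omega
        exact absurd ha (this ▸ hn)

lemma trans_down {P : ℕ → Prop} {a b : ℕ} (hab : a < b) (ha : ¬ P a) (hb : P b) :
    ∃ k, a < k ∧ k ≤ b ∧ P k ∧ ¬ P (k - 1) := by
  obtain ⟨k, h1, h2, h3, h4⟩ := trans_up (P := fun t => ¬ P t) hab ha (not_not.mpr hb)
  exact ⟨k + 1, by omega, by omega, not_not.mp h4, by simpa using h3⟩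

theorem boundary_card_of_black_row_and_col (m : ℕ) (hm : 1 ≤ m)
    (B : Finset (ℕ × ℕ)) (hB : B ⊆ gridCells m)
    (hrow : ∃ i ∈ Finset.Icc 1 m, ∀ j ∈ Finset.Icc 1 m, (i, j) ∈ B)
    (hcol : ∃ j ∈ Finset.Icc 1 m, ∀ i ∈ Finset.Icc 1 m, (i, j) ∈ B) :
    ((gridBoundary m B).card : ℝ) ≥ Real.sqrt ((m : ℝ) ^ 2 - (B.card : ℝ)) := by
  classical
  obtain ⟨i₀, hi₀, hrowB⟩ := hrow
  obtain ⟨j₀, hj₀, hcolB⟩ := hcol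
  set W := gridCells m \ B with hWdef
  set D := gridBoundary m B with hDdef
  set R := W.image Prod.fst with hRdef
  set C := W.image Prod.snd with hCdef
  have hi₀' : 1 ≤ i₀ ∧ i₀ ≤ m := Finset.mem_Icc.mp hi₀
  have hj₀' : 1 ≤ j₀ ∧ j₀ ≤ m := Finset.mem_Icc.mp hj₀
  have memD : ∀ c : ℕ × ℕ, c ∈ gridCells m → c ∉ B → (∃ c' ∈ B, adjacent c c') → c ∈ D := by
    intro c h1 h2 h3
    rw [hDdef, gridBoundary, Finset.mem_filter]
    exact ⟨h1, h2, h3⟩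
  have memGrid : ∀ a b : ℕ, 1 ≤ a → a ≤ m → 1 ≤ b → b ≤ m → ((a, b) : ℕ × ℕ) ∈ gridCells m := by
    intro a b h1 h2 h3 h4
    simp [gridCells, Finset.mem_Icc, h1, h2, h3, h4]
  -- every row index in R carries a boundary cell
  have hrowc : ∀ i : ℕ, ∃ c : ℕ × ℕ, i ∈ R → c ∈ D ∧ c.1 = i := by
    intro i
    by_cases h : i ∈ R
    · obtain ⟨w, hw, hwi⟩ := Finset.mem_image.mp h
      obtain ⟨hwg, hwB⟩ := Finset.mem_sdiff.mp hw
      set j := w.2 with hj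
      have hww : w = (i, j) := by rw [← hwi]
      rw [hww] at hwB hwg
      have hgr := Finset.mem_product.mp hwg
      have hij : 1 ≤ i ∧ i ≤ m := Finset.mem_Icc.mp hgr.1
      have hjj : 1 ≤ j ∧ j ≤ m := Finset.mem_Icc.mp hgr.2
      have hblack : (i, j₀) ∈ B := hcolB i (Finset.mem_Icc.mpr ⟨hij.1, hij.2⟩)
      have hne : j ≠ j₀ := by rintro rfl; exact hwB hblack
      rcases Nat.lt_or_ge j j₀ with hlt | hge
      · obtain ⟨k, h1, h2, h3, h4⟩ := trans_up (P := fun t => (i, t) ∉ B) hlt hwB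
          (not_not.mpr hblack)
        refine ⟨(i, k), fun _ => ⟨memD _ (memGrid i k hij.1 hij.2 (by omega) (by omega)) h3
          ⟨(i, k + 1), not_not.mp h4, Or.inl ⟨rfl, Or.inl rfl⟩⟩, rfl⟩⟩
      · have hlt : j₀ < j := by omega
        obtain ⟨k, h1, h2, h3, h4⟩ := trans_down (P := fun t => (i, t) ∉ B) hlt
          (not_not.mpr hblack) hwB
        refine ⟨(i, k), fun _ => ⟨memD _ (memGrid i k hij.1 hij.2 (by omega) (by omega)) h3
          ⟨(i, k - 1), not_not.mp h4, Or.inl ⟨rfl, Or.inr (by simp; omega)⟩⟩, rfl⟩⟩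
    · exact ⟨(0, 0), fun h' => absurd h' h⟩
  -- every column index in C carries a boundary cell
  have hcolc : ∀ j : ℕ, ∃ c : ℕ × ℕ, j ∈ C → c ∈ D ∧ c.2 = j := by
    intro j
    by_cases h : j ∈ C
    · obtain ⟨w, hw, hwj⟩ := Finset.mem_image.mp h
      obtain ⟨hwg, hwB⟩ := Finset.mem_sdiff.mp hw
      set i := w.1 with hi
      have hww : w = (i, j) := by rw [← hwj]
      rw [hww] at hwB hwg
      have hgr := Finset.mem_product.mp hwg
      have hii : 1 ≤ i ∧ i ≤ m := Finset.mem_Icc.mp hgr.1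
      have hjj : 1 ≤ j ∧ j ≤ m := Finset.mem_Icc.mp hgr.2
      have hblack : (i₀, j) ∈ B := hrowB j (Finset.mem_Icc.mpr ⟨hjj.1, hjj.2⟩)
      rcases Nat.lt_or_ge i i₀ with hlt | hge
      · obtain ⟨k, h1, h2, h3, h4⟩ := trans_up (P := fun t => (t, j) ∉ B) hlt hwB
          (not_not.mpr hblack)
        refine ⟨(k, j), fun _ => ⟨memD _ (memGrid k j (by omega) (by omega) hjj.1 hjj.2) h3
          ⟨(k + 1, j), not_not.mp h4, Or.inr ⟨rfl, Or.inl rfl⟩⟩, rfl⟩⟩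
      · have hne : i ≠ i₀ := by rintro rfl; exact hwB hblack
        have hlt : i₀ < i := by omega
        obtain ⟨k, h1, h2, h3, h4⟩ := trans_down (P := fun t => (t, j) ∉ B) hlt
          (not_not.mpr hblack) hwB
        refine ⟨(k, j), fun _ => ⟨memD _ (memGrid k j (by omega) (by omega) hjj.1 hjj.2) h3
          ⟨(k - 1, j), not_not.mp h4, Or.inr ⟨rfl, Or.inr (by simp; omega)⟩⟩, rfl⟩⟩
    · exact ⟨(0, 0), fun h' => absurd h' h⟩
  choose f hf using hrowc
  choose g hg using hcolc
  have hRcard : R.card ≤ D.card := by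
    apply Finset.card_le_card_of_injOn f (fun i hi => (hf i hi).1)
    intro a ha b hb hab
    have := (hf a ha).2
    have := (hf b hb).2
    rw [← (hf a ha).2, ← (hf b hb).2, hab]
  have hCcard : C.card ≤ D.card := by
    apply Finset.card_le_card_of_injOn g (fun j hj => (hg j hj).1)
    intro a ha b hb hab
    rw [← (hg a ha).2, ← (hg b hb).2, hab]
  have hWsub : W ⊆ R ×ˢ C := by
    intro c hc
    rw [Finset.mem_product]
    exact ⟨Finset.mem_image_of_mem _ hc, Finset.mem_image_of_mem _ hc⟩
  have hW1 : W.card ≤ D.card * D.card := by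
    calc W.card ≤ (R ×ˢ C).card := Finset.card_le_card hWsub
      _ = R.card * C.card := Finset.card_product _ _
      _ ≤ D.card * D.card := Nat.mul_le_mul hRcard hCcard
  have hgridcard : (gridCells m).card = m * m := by
    simp [gridCells, Nat.card_Icc]
  have hBle : B.card ≤ m * m := by
    rw [← hgridcard]; exact Finset.card_le_card hB
  have hWcard : W.card = m * m - B.card := by
    rw [hWdef, Finset.card_sdiff_of_subset hB, hgridcard]
  have key : (m : ℝ) ^ 2 - (B.card : ℝ) ≤ ((D.card : ℝ)) ^ 2 := by
    have h1 : ((m * m - B.card : ℕ) : ℝ) ≤ ((D.card * D.card : ℕ) : ℝ) := by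
      exact_mod_cast hWcard ▸ hW1
    rw [Nat.cast_sub hBle] at h1
    push_cast at h1
    nlinarith [h1]
  rw [ge_iff_le]
  calc Real.sqrt ((m : ℝ) ^ 2 - (B.card : ℝ)) ≤ Real.sqrt ((D.card : ℝ) ^ 2) :=
        Real.sqrt_le_sqrt key
    _ = (D.card : ℝ) := Real.sqrt_sq (by positivity)
end

section
/- Let K ≥ 1 be an integer and let (q_t)_{t∈ℕ} be a sequence of integers such that q_0 ≥ 1 and, for every t ≥ 0, q_t ≤ K and q_{t+1} ≥ q_t + √(min{q_t, K − q_t}). Then for every natural number t such that q_i < K/2 for all i < t, it holds that q_t ≥ t²/8. -/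
theorem q_ge_sq_div_eight (K : ℤ) (hK : 1 ≤ K) (q : ℕ → ℤ) (hq0 : 1 ≤ q 0)
    (hqK : ∀ t : ℕ, q t ≤ K)
    (hstep : ∀ t : ℕ,
      (q (t + 1) : ℝ) ≥ (q t : ℝ) + Real.sqrt (min ((q t : ℝ)) ((K : ℝ) - (q t : ℝ))))
    (t : ℕ) (hlt : ∀ i : ℕ, i < t → (q i : ℝ) < (K : ℝ) / 2) :
    (q t : ℝ) ≥ (t : ℝ) ^ 2 / 8 := by
  suffices h : ∀ s : ℕ, (∀ i : ℕ, i < s → (q i : ℝ) < (K : ℝ) / 2) →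
      (1 : ℝ) ≤ (q s : ℝ) ∧ (q s : ℝ) ≥ (s : ℝ) ^ 2 / 8 by
    exact (h t hlt).2
  intro s
  induction s with
  | zero =>
    intro _
    have : (1 : ℝ) ≤ (q 0 : ℝ) := by exact_mod_cast hq0
    constructor
    · exact this
    · norm_num; linarith
  | succ n ih =>
    intro hlt'
    obtain ⟨h1, h2⟩ := ih (fun i hi => hlt' i (Nat.lt_succ_of_lt hi))
    have hn : (q n : ℝ) < (K : ℝ) / 2 := hlt' n (Nat.lt_succ_self n)
    have hmin : min ((q n : ℝ)) ((K : ℝ) - (q n : ℝ)) = (q n : ℝ) := by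
      apply min_eq_left; linarith
    have hstepn := hstep n
    rw [hmin] at hstepn
    have hsq : ((2 * (n : ℝ) + 1) / 8) ≤ Real.sqrt ((q n : ℝ)) := by
      rw [show ((2 * (n : ℝ) + 1) / 8) = Real.sqrt (((2 * (n : ℝ) + 1) / 8) ^ 2) by
        rw [Real.sqrt_sq (by positivity)]]
      apply Real.sqrt_le_sqrt
      have hn0 : (0 : ℝ) ≤ (n : ℝ) := Nat.cast_nonneg n
      nlinarith [sq_nonneg ((n : ℝ) - 1)]
    have hsqnn : (0 : ℝ) ≤ Real.sqrt ((q n : ℝ)) := Real.sqrt_nonneg _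
    constructor
    · linarith
    · push_cast
      nlinarith
end

section
/- Let K ≥ 1 be an integer and let (q_t)_{t∈ℕ} be a sequence of integers such that q_0 ≥ 1 and, for every t ≥ 0, q_t ≤ K and q_{t+1} ≥ q_t + √(min{q_t, K − q_t}). Then there exists a natural number τ with τ ≤ 2·√K + 1 such that q_τ ≥ K/2. -/
lemma sqrt_step (x : ℝ) (hx : 1 ≤ x) :
    Real.sqrt x + 2/5 ≤ Real.sqrt (x + Real.sqrt x) := by
  have hx0 : (0:ℝ) ≤ x := by linarith
  have h1 : 1 ≤ Real.sqrt x := by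
    rw [show (1:ℝ) = Real.sqrt 1 by simp]
    exact Real.sqrt_le_sqrt hx
  have hsq : Real.sqrt x ^ 2 = x := Real.sq_sqrt hx0
  rw [show Real.sqrt x + 2/5 = Real.sqrt ((Real.sqrt x + 2/5)^2) from
      (Real.sqrt_sq (by linarith)).symm]
  apply Real.sqrt_le_sqrt
  nlinarith

theorem exists_half_time (K : ℤ) (hK : 1 ≤ K) (q : ℕ → ℤ) (hq0 : 1 ≤ q 0)
    (hqK : ∀ t : ℕ, q t ≤ K)
    (hstep : ∀ t : ℕ,
      (q (t + 1) : ℝ) ≥ (q t : ℝ) + Real.sqrt (min ((q t : ℝ)) ((K : ℝ) - (q t : ℝ)))) :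
    ∃ τ : ℕ, (τ : ℝ) ≤ 2 * Real.sqrt (K : ℝ) + 1 ∧ (q τ : ℝ) ≥ (K : ℝ) / 2 := by
  have hqpos : ∀ t, (1:ℝ) ≤ (q t : ℝ) := by
    intro t
    induction t with
    | zero => exact_mod_cast hq0
    | succ n ih =>
      have := hstep n
      have hs := Real.sqrt_nonneg (min ((q n : ℝ)) ((K : ℝ) - (q n : ℝ)))
      linarith
  have hK0 : (0:ℝ) ≤ Real.sqrt (K : ℝ) := Real.sqrt_nonneg _
  by_contra h
  push_neg at h
  -- all τ ≤ 2√K+1 have q τ < K/2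
  set B : ℝ := 2 * Real.sqrt (K : ℝ) + 1 with hB
  have hB0 : 0 ≤ B := by positivity
  set T : ℕ := ⌊B⌋₊ with hT
  have hTle : (T : ℝ) ≤ B := Nat.floor_le hB0
  have hsmall : ∀ s : ℕ, s ≤ T → (q s : ℝ) < (K : ℝ) / 2 := by
    intro s hs
    exact h s (le_trans (by exact_mod_cast hs) hTle)
  -- key induction
  have key : ∀ t : ℕ, (∀ s, s ≤ t → (q s : ℝ) < (K : ℝ) / 2) →
      1 + (2/5) * t ≤ Real.sqrt ((q t : ℝ)) := by
    intro t
    induction t with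
    | zero =>
      intro _
      have : Real.sqrt 1 ≤ Real.sqrt ((q 0 : ℝ)) := Real.sqrt_le_sqrt (hqpos 0)
      simpa using this
    | succ n ih =>
      intro hall
      have ihn := ih (fun s hs => hall s (le_trans hs (Nat.le_succ n)))
      have hqn : (q n : ℝ) < (K : ℝ) / 2 := hall n (Nat.le_succ n)
      have hmin : min ((q n : ℝ)) ((K : ℝ) - (q n : ℝ)) = (q n : ℝ) :=
        min_eq_left (by linarith)
      have hstepn := hstep n
      rw [hmin] at hstepn
      have h1 : Real.sqrt ((q n : ℝ) + Real.sqrt ((q n : ℝ))) ≤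
          Real.sqrt ((q (n+1) : ℝ)) := Real.sqrt_le_sqrt hstepn
      have h2 := sqrt_step ((q n : ℝ)) (hqpos n)
      push_cast
      linarith
  have hkey := key T hsmall
  -- q T < K/2 ≤ (71/100 √K)^2 bound
  have hqT : (q T : ℝ) < (K : ℝ) / 2 := hsmall T le_rfl
  have hsqK : Real.sqrt (K : ℝ) ^ 2 = (K : ℝ) := Real.sq_sqrt (by exact_mod_cast (by linarith : (0:ℤ) ≤ K))
  have hupper : Real.sqrt ((q T : ℝ)) ≤ (71/100) * Real.sqrt (K : ℝ) := by
    rw [show (71/100) * Real.sqrt (K : ℝ) =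
        Real.sqrt (((71/100) * Real.sqrt (K : ℝ))^2) from
        (Real.sqrt_sq (by positivity)).symm]
    apply Real.sqrt_le_sqrt
    nlinarith
  have hTlb : 2 * Real.sqrt (K : ℝ) < (T : ℝ) + 1 := by
    have := Nat.lt_floor_add_one B
    calc 2 * Real.sqrt (K : ℝ) = B - 1 := by rw [hB]; ring
    _ < (T : ℝ) + 1 - 1 + 1 := by
        have : B < (T:ℝ) + 1 := this
        linarith
    _ = (T : ℝ) + 1 := by ring
  -- so (T:ℝ) > 2√K - 1... need better: T ≥ 2√K since T = floor(2√K+1) ≥ 2√K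
  have hTlb2 : 2 * Real.sqrt (K : ℝ) ≤ (T : ℝ) := by
    have h1 : B - 1 < (T : ℝ) := by
      have := Nat.sub_one_lt_floor B
      simpa [hT] using this
    linarith [show B - 1 = 2 * Real.sqrt (K:ℝ) by rw [hB]; ring]
  have hsqrt1 : (1:ℝ) ≤ Real.sqrt (K : ℝ) := by
    rw [show (1:ℝ) = Real.sqrt 1 by simp]
    exact Real.sqrt_le_sqrt (by exact_mod_cast hK)
  nlinarith
end

section
/- Let K ≥ 3 be an integer and let (q_t)_{t∈ℕ} be a sequence of integers such that q_0 ≥ 1 and, for every t ≥ 0, q_t ≤ K and q_{t+1} ≥ q_t + √(min{q_t, K − q_t}). Let τ be a natural number with τ ≤ 2·√K + 1 and q_τ ≥ K/2. Then for every natural number t with τ ≤ t ≤ ⌈5·√K⌉ it holds that q_t ≥ K − ⌈(⌈5·√K⌉ − t)²/9⌉. -/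
theorem q_ge_K_sub_ceil (K : ℤ) (hK : 3 ≤ K) (q : ℕ → ℤ) (hq0 : 1 ≤ q 0)
    (hqK : ∀ t : ℕ, q t ≤ K)
    (hstep : ∀ t : ℕ,
      (q (t + 1) : ℝ) ≥ (q t : ℝ) + Real.sqrt (min ((q t : ℝ)) ((K : ℝ) - (q t : ℝ))))
    (τ : ℕ) (hτ : (τ : ℝ) ≤ 2 * Real.sqrt (K : ℝ) + 1) (hqτ : (q τ : ℝ) ≥ (K : ℝ) / 2)
    (t : ℕ) (ht1 : τ ≤ t) (ht2 : (t : ℤ) ≤ ⌈5 * Real.sqrt (K : ℝ)⌉) :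
    (q t : ℝ) ≥ (K : ℝ) -
      (⌈((((⌈5 * Real.sqrt (K : ℝ)⌉ : ℤ) - (t : ℤ) : ℤ) : ℝ) ^ 2 / 9)⌉ : ℝ) := by
  set T : ℤ := ⌈5 * Real.sqrt (K : ℝ)⌉ with hT
  set x : ℝ := Real.sqrt (K : ℝ) with hx
  have hx0 : 0 ≤ x := Real.sqrt_nonneg _
  have hKR : (3:ℝ) ≤ (K:ℝ) := by exact_mod_cast hK
  have hxsq : x ^ 2 = (K : ℝ) := Real.sq_sqrt (by linarith)
  have hx2 : (3:ℝ) ≤ x ^ 2 := by rw [hxsq]; exact hKR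
  have hx1 : (1:ℝ) ≤ x := by nlinarith
  have hTx : 5 * x ≤ (T : ℝ) := Int.le_ceil _
  -- q is nondecreasing (as reals)
  have mono : ∀ a b : ℕ, a ≤ b → (q a : ℝ) ≤ (q b : ℝ) := by
    intro a b hab
    induction b with
    | zero =>
      have : a = 0 := Nat.le_zero.mp hab
      simp [this]
    | succ n ih =>
      rcases Nat.lt_or_ge a (n+1) with h | h
      · have h1 := ih (Nat.lt_succ_iff.mp h)
        have hs := hstep n
        have h2 := Real.sqrt_nonneg (min ((q n : ℝ)) ((K : ℝ) - (q n : ℝ)))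
        linarith
      · have : a = n + 1 := le_antisymm hab h
        simp [this]
  have main : ∀ s : ℕ, τ ≤ s → (s : ℤ) ≤ T →
      (K : ℝ) - (q s : ℝ) ≤ (((T - (s:ℤ) : ℤ) : ℝ)) ^ 2 / 9 := by
    intro s hs
    induction s, hs using Nat.le_induction with
    | base =>
      intro hτT
      have ha : 3 * x - 1 ≤ ((T - (τ:ℤ) : ℤ) : ℝ) := by
        push_cast; linarith
      have h0 : (0:ℝ) ≤ 3 * x - 1 := by linarith
      have hsq : (3*x-1) * (3*x-1) ≤ ((T - (τ:ℤ) : ℤ) : ℝ) * ((T - (τ:ℤ) : ℤ) : ℝ) :=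
        mul_le_mul ha ha h0 (by linarith)
      nlinarith [sq_nonneg (x - 2)]
    | succ n hn ih =>
      intro hn1T
      have hnT : (n : ℤ) ≤ T := by omega
      have ihn := ih hnT
      have hhalf : (K : ℝ) / 2 ≤ (q n : ℝ) := le_trans hqτ (mono τ n hn)
      have hmin : min ((q n : ℝ)) ((K : ℝ) - (q n : ℝ)) = (K : ℝ) - (q n : ℝ) :=
        min_eq_right (by linarith)
      have hs := hstep n
      rw [hmin] at hs
      have hqnK : ((q n : ℤ) : ℝ) ≤ (K : ℝ) := by exact_mod_cast hqK n
      have hd0 : (0:ℝ) ≤ (K : ℝ) - (q n : ℝ) := by linarith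
      set d : ℝ := (K : ℝ) - (q n : ℝ) with hd
      set a : ℝ := ((T - (n:ℤ) : ℤ) : ℝ) with haeq
      have ha1 : (1:ℝ) ≤ a := by
        have h1 : (1:ℤ) ≤ T - (n:ℤ) := by omega
        rw [haeq]; exact_mod_cast h1
      have hgoalcast : (((T - ((n:ℕ)+1:ℕ) : ℤ) : ℝ)) = a - 1 := by
        rw [haeq]; push_cast; ring
      rw [hgoalcast]
      rcases eq_or_lt_of_le hd0 with h0 | h1
      · have hnn : Real.sqrt d ≥ 0 := Real.sqrt_nonneg d
        have hq1 : (q (n+1) : ℝ) ≥ (q n : ℝ) := by linarith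
        nlinarith [sq_nonneg (a - 1)]
      · -- d is a positive integer, so d ≥ 1
        have hdint : (1:ℝ) ≤ d := by
          have h2 : (0:ℤ) < K - q n := by
            have : (0:ℝ) < ((K - q n : ℤ):ℝ) := by push_cast; linarith
            exact_mod_cast this
          have h3 : (1:ℤ) ≤ K - q n := h2
          have : ((1:ℤ):ℝ) ≤ ((K - q n : ℤ):ℝ) := by exact_mod_cast h3
          push_cast at this
          linarith
        set y : ℝ := Real.sqrt d with hy
        have hy1 : (1:ℝ) ≤ y := by
          rw [hy, show (1:ℝ) = Real.sqrt 1 by simp]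
          exact Real.sqrt_le_sqrt hdint
        have hysq : y ^ 2 = d := Real.sq_sqrt (by linarith)
        have hya : y ≤ a / 3 := by
          have h3 : (0:ℝ) ≤ a / 3 := by linarith
          have h4 : d ≤ (a/3)^2 := by
            rw [show (a/3)^2 = a^2/9 from by ring]; exact ihn
          calc y = Real.sqrt d := hy
          _ ≤ Real.sqrt ((a/3)^2) := Real.sqrt_le_sqrt h4
          _ = a/3 := Real.sqrt_sq h3
        have hq1 : (K:ℝ) - (q (n+1) : ℝ) ≤ d - y := by
          rw [hd, hy]; linarith
        nlinarith [mul_nonneg (by linarith : (0:ℝ) ≤ a/3 - y)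
          (by linarith : (0:ℝ) ≤ a/3 + y - 1)]
  have hmain := main t ht1 ht2
  have hceil := Int.le_ceil ((((T - (t:ℤ) : ℤ) : ℝ)) ^ 2 / 9)
  linarith [hceil]
end
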